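/- For every continuous function f : [0,1] → ℂ and every c ∈ ℂ there exists exactly one function w : [0,1] → ℂ of class C⁴ satisfying w''''(s) − (γ − η²)·w''(s) = −f(s) on [0,1], w(0) = 0, w''(0) = 0, w''(1) + κ·c = 0, and w'''(1) − (γ − η²)·w'(1) = 0; moreover, writing μ = √(γ − η²) and F(s) = ∫₀ˢ ( ∫ₜ¹ f(r) dr ) dt, this solution is given explicitly by w(s) = b·sinh(μs) + (1/μ)·∫₀ˢ sinh(μ(s − r))·F(r) dr with b = ( −μ·∫₀¹ sinh(μ(1 − r))·F(r) dr − F(1) − κ·c ) / ( μ²·sinh(μ) ). -/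

import Mathlib

open Set Complex

/-- `F(s) = ∫₀ˢ (∫ₜ¹ f(r) dr) dt`. -/
noncomputable def Fint (f : ℝ → ℂ) (s : ℝ) : ℂ :=
  ∫ t in (0:ℝ)..s, (∫ r in t..(1:ℝ), f r)

/-- The constant `b` in the explicit solution formula. -/
noncomputable def bconst (η γ κ : ℝ) (f : ℝ → ℂ) (c : ℂ) : ℂ :=
  (-((Real.sqrt (γ - η^2) : ℝ) : ℂ)
      * (∫ r in (0:ℝ)..1,
          ((Real.sinh (Real.sqrt (γ - η^2) * (1 - r)) : ℝ) : ℂ) * Fint f r)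
    - Fint f 1 - ((κ : ℝ) : ℂ) * c)
  / (((Real.sqrt (γ - η^2))^2 * Real.sinh (Real.sqrt (γ - η^2)) : ℝ) : ℂ)

/-- The explicit solution
`w(s) = b·sinh(μs) + (1/μ)·∫₀ˢ sinh(μ(s−r))·F(r) dr` with `μ = √(γ−η²)`. -/
noncomputable def wExplicit (η γ κ : ℝ) (f : ℝ → ℂ) (c : ℂ) (s : ℝ) : ℂ :=
  bconst η γ κ f c * ((Real.sinh (Real.sqrt (γ - η^2) * s) : ℝ) : ℂ)
    + (1 / ((Real.sqrt (γ - η^2) : ℝ) : ℂ))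
        * ∫ r in (0:ℝ)..s,
            ((Real.sinh (Real.sqrt (γ - η^2) * (s - r)) : ℝ) : ℂ) * Fint f r

/-- The boundary-value problem solved in the inversion of the static part of
the closed-loop system operator. -/
def SolvesBVP (η γ κ : ℝ) (f : ℝ → ℂ) (c : ℂ) (w : ℝ → ℂ) : Prop :=
  ContDiff ℝ 4 w ∧
  (∀ s ∈ Icc (0:ℝ) 1,
    iteratedDeriv 4 w s - ((γ - η^2 : ℝ) : ℂ) * iteratedDeriv 2 w s = -f s) ∧
  w 0 = 0 ∧ iteratedDeriv 2 w 0 = 0 ∧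
  iteratedDeriv 2 w 1 + ((κ : ℝ) : ℂ) * c = 0 ∧
  iteratedDeriv 3 w 1 - ((γ - η^2 : ℝ) : ℂ) * deriv w 1 = 0

/-! ### Auxiliary definitions for the explicit solution -/

noncomputable def Gfun (g : ℝ → ℂ) (t : ℝ) : ℂ := ∫ r in t..(1:ℝ), g r
noncomputable def Ffun (g : ℝ → ℂ) (s : ℝ) : ℂ := ∫ t in (0:ℝ)..s, Gfun g t
noncomputable def scf (μ s : ℝ) : ℂ := ((Real.sinh (μ * s) : ℝ) : ℂ)
noncomputable def ccf (μ s : ℝ) : ℂ := ((Real.cosh (μ * s) : ℝ) : ℂ)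
noncomputable def Pf (μ : ℝ) (g : ℝ → ℂ) (s : ℝ) : ℂ := ∫ r in (0:ℝ)..s, ccf μ r * Ffun g r
noncomputable def Qf (μ : ℝ) (g : ℝ → ℂ) (s : ℝ) : ℂ := ∫ r in (0:ℝ)..s, scf μ r * Ffun g r
noncomputable def wfun (μ : ℝ) (g : ℝ → ℂ) (b : ℂ) (s : ℝ) : ℂ :=
  b * scf μ s + (1 / (μ:ℂ)) * (scf μ s * Pf μ g s - ccf μ s * Qf μ g s)
noncomputable def w1fun (μ : ℝ) (g : ℝ → ℂ) (b : ℂ) (s : ℝ) : ℂ :=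
  b * (μ:ℂ) * ccf μ s + (ccf μ s * Pf μ g s - scf μ s * Qf μ g s)
noncomputable def w2fun (μ : ℝ) (g : ℝ → ℂ) (b : ℂ) (s : ℝ) : ℂ :=
  (μ:ℂ)^2 * wfun μ g b s + Ffun g s
noncomputable def w3fun (μ : ℝ) (g : ℝ → ℂ) (b : ℂ) (s : ℝ) : ℂ :=
  (μ:ℂ)^2 * w1fun μ g b s + Gfun g s
noncomputable def w4fun (μ : ℝ) (g : ℝ → ℂ) (b : ℂ) (s : ℝ) : ℂ :=
  (μ:ℂ)^2 * w2fun μ g b s - g s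

lemma hasDerivAt_primitive {g : ℝ → ℂ} (hg : Continuous g) (a x : ℝ) :
    HasDerivAt (fun s => ∫ t in a..s, g t) (g x) x :=
  intervalIntegral.integral_hasDerivAt_right (hg.intervalIntegrable a x)
    (hg.stronglyMeasurableAtFilter _ _) hg.continuousAt

lemma Gfun_hasDerivAt {g : ℝ → ℂ} (hg : Continuous g) (x : ℝ) :
    HasDerivAt (Gfun g) (-(g x)) x := by
  have h0 : Gfun g = fun t => -∫ r in (1:ℝ)..t, g r := by
    funext t; rw [Gfun, intervalIntegral.integral_symm]
  rw [h0]
  exact (hasDerivAt_primitive hg 1 x).neg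

lemma Gfun_continuous {g : ℝ → ℂ} (hg : Continuous g) : Continuous (Gfun g) :=
  continuous_iff_continuousAt.mpr fun x =>
    ((Gfun_hasDerivAt hg x).differentiableAt).continuousAt

lemma Ffun_hasDerivAt {g : ℝ → ℂ} (hg : Continuous g) (x : ℝ) :
    HasDerivAt (Ffun g) (Gfun g x) x :=
  hasDerivAt_primitive (Gfun_continuous hg) 0 x

lemma Ffun_continuous {g : ℝ → ℂ} (hg : Continuous g) : Continuous (Ffun g) :=
  continuous_iff_continuousAt.mpr fun x =>
    ((Ffun_hasDerivAt hg x).differentiableAt).continuousAt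

lemma scf_continuous (μ : ℝ) : Continuous (scf μ) :=
  Complex.continuous_ofReal.comp (Real.continuous_sinh.comp (continuous_const.mul continuous_id))

lemma ccf_continuous (μ : ℝ) : Continuous (ccf μ) :=
  Complex.continuous_ofReal.comp (Real.continuous_cosh.comp (continuous_const.mul continuous_id))

lemma scf_hasDerivAt (μ x : ℝ) : HasDerivAt (scf μ) ((μ:ℂ) * ccf μ x) x := by
  have h1 : HasDerivAt (fun s : ℝ => μ * s) μ x := by
    simpa using (hasDerivAt_id x).const_mul μ
  have h2 : HasDerivAt (fun s : ℝ => Real.sinh (μ * s)) (Real.cosh (μ * x) * μ) x :=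
    (Real.hasDerivAt_sinh (μ * x)).comp x h1
  have h3 := h2.ofReal_comp
  refine h3.congr_deriv ?_
  unfold ccf; push_cast; ring

lemma ccf_hasDerivAt (μ x : ℝ) : HasDerivAt (ccf μ) ((μ:ℂ) * scf μ x) x := by
  have h1 : HasDerivAt (fun s : ℝ => μ * s) μ x := by
    simpa using (hasDerivAt_id x).const_mul μ
  have h2 : HasDerivAt (fun s : ℝ => Real.cosh (μ * s)) (Real.sinh (μ * x) * μ) x :=
    (Real.hasDerivAt_cosh (μ * x)).comp x h1
  have h3 := h2.ofReal_comp
  refine h3.congr_deriv ?_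
  unfold scf; push_cast; ring

lemma Pf_hasDerivAt {g : ℝ → ℂ} (hg : Continuous g) (μ x : ℝ) :
    HasDerivAt (Pf μ g) (ccf μ x * Ffun g x) x :=
  hasDerivAt_primitive ((ccf_continuous μ).mul (Ffun_continuous hg)) 0 x

lemma Qf_hasDerivAt {g : ℝ → ℂ} (hg : Continuous g) (μ x : ℝ) :
    HasDerivAt (Qf μ g) (scf μ x * Ffun g x) x :=
  hasDerivAt_primitive ((scf_continuous μ).mul (Ffun_continuous hg)) 0 x

lemma cosh_sq_id (μ x : ℝ) : ccf μ x ^ 2 - scf μ x ^ 2 = 1 := by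
  unfold ccf scf
  norm_cast
  exact Real.cosh_sq_sub_sinh_sq _

lemma wfun_hasDerivAt {g : ℝ → ℂ} (hg : Continuous g) {μ : ℝ} (hμ : μ ≠ 0) (b : ℂ) (x : ℝ) :
    HasDerivAt (wfun μ g b) (w1fun μ g b x) x := by
  have h := ((scf_hasDerivAt μ x).const_mul b).add
    ((((scf_hasDerivAt μ x).mul (Pf_hasDerivAt hg μ x)).sub
      ((ccf_hasDerivAt μ x).mul (Qf_hasDerivAt hg μ x))).const_mul (1 / (μ:ℂ)))
  refine h.congr_deriv ?_
  have hμ' : (μ:ℂ) ≠ 0 := Complex.ofReal_ne_zero.mpr hμ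
  unfold w1fun
  field_simp
  ring

lemma w1fun_hasDerivAt {g : ℝ → ℂ} (hg : Continuous g) {μ : ℝ} (hμ : μ ≠ 0) (b : ℂ) (x : ℝ) :
    HasDerivAt (w1fun μ g b) (w2fun μ g b x) x := by
  have h := ((ccf_hasDerivAt μ x).const_mul (b * (μ:ℂ))).add
    (((ccf_hasDerivAt μ x).mul (Pf_hasDerivAt hg μ x)).sub
      ((scf_hasDerivAt μ x).mul (Qf_hasDerivAt hg μ x)))
  refine h.congr_deriv ?_
  have hμ' : (μ:ℂ) ≠ 0 := Complex.ofReal_ne_zero.mpr hμ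
  have hid := cosh_sq_id μ x
  unfold w2fun wfun
  field_simp
  linear_combination (Ffun g x) * hid

lemma w2fun_hasDerivAt {g : ℝ → ℂ} (hg : Continuous g) {μ : ℝ} (hμ : μ ≠ 0) (b : ℂ) (x : ℝ) :
    HasDerivAt (w2fun μ g b) (w3fun μ g b x) x :=
  ((wfun_hasDerivAt hg hμ b x).const_mul _).add (Ffun_hasDerivAt hg x)

lemma w3fun_hasDerivAt {g : ℝ → ℂ} (hg : Continuous g) {μ : ℝ} (hμ : μ ≠ 0) (b : ℂ) (x : ℝ) :
    HasDerivAt (w3fun μ g b) (w4fun μ g b x) x := by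
  have h := ((w1fun_hasDerivAt hg hμ b x).const_mul ((μ:ℂ)^2)).add (Gfun_hasDerivAt hg x)
  exact h.congr_deriv (by simp [w4fun, sub_eq_add_neg])

lemma contDiff_of_hasDerivAt_chain {w w1 : ℝ → ℂ} {n : ℕ}
    (h : ∀ x, HasDerivAt w (w1 x) x) (h1 : ContDiff ℝ n w1) : ContDiff ℝ (n+1) w := by
  have hd : Differentiable ℝ w := fun x => (h x).differentiableAt
  have he : deriv w = w1 := funext fun x => (h x).deriv
  have : ContDiff ℝ ((n : WithTop ℕ∞) + 1) w :=
    contDiff_succ_iff_deriv.mpr ⟨hd, by simp, he ▸ h1⟩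
  exact_mod_cast this

lemma wfun_contDiff {g : ℝ → ℂ} (hg : Continuous g) {μ : ℝ} (hμ : μ ≠ 0) (b : ℂ) :
    ContDiff ℝ 4 (wfun μ g b) := by
  have c0 : ContDiff ℝ (0:ℕ) (w4fun μ g b) := by
    rw [show ((0:ℕ) : WithTop ℕ∞) = 0 by norm_cast, contDiff_zero]
    have hw2 : Continuous (w2fun μ g b) := continuous_iff_continuousAt.mpr fun x =>
      ((w2fun_hasDerivAt hg hμ b x).differentiableAt).continuousAt
    exact (continuous_const.mul hw2).sub hg
  have c1 : ContDiff ℝ (1:ℕ) (w3fun μ g b) :=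
    contDiff_of_hasDerivAt_chain (w3fun_hasDerivAt hg hμ b) c0
  have c2 : ContDiff ℝ (2:ℕ) (w2fun μ g b) :=
    contDiff_of_hasDerivAt_chain (w2fun_hasDerivAt hg hμ b) c1
  have c3 : ContDiff ℝ (3:ℕ) (w1fun μ g b) :=
    contDiff_of_hasDerivAt_chain (w1fun_hasDerivAt hg hμ b) c2
  have c4 : ContDiff ℝ (4:ℕ) (wfun μ g b) :=
    contDiff_of_hasDerivAt_chain (wfun_hasDerivAt hg hμ b) c3
  exact_mod_cast c4

lemma deriv_wfun {g : ℝ → ℂ} (hg : Continuous g) {μ : ℝ} (hμ : μ ≠ 0) (b : ℂ) :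
    deriv (wfun μ g b) = w1fun μ g b :=
  funext fun x => (wfun_hasDerivAt hg hμ b x).deriv

lemma iteratedDeriv_two_wfun {g : ℝ → ℂ} (hg : Continuous g) {μ : ℝ} (hμ : μ ≠ 0) (b : ℂ) :
    iteratedDeriv 2 (wfun μ g b) = w2fun μ g b := by
  rw [show (2:ℕ) = 1 + 1 from rfl, iteratedDeriv_succ, iteratedDeriv_one, deriv_wfun hg hμ b]
  exact funext fun x => (w1fun_hasDerivAt hg hμ b x).deriv

lemma iteratedDeriv_three_wfun {g : ℝ → ℂ} (hg : Continuous g) {μ : ℝ} (hμ : μ ≠ 0) (b : ℂ) :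
    iteratedDeriv 3 (wfun μ g b) = w3fun μ g b := by
  rw [show (3:ℕ) = 2 + 1 from rfl, iteratedDeriv_succ, iteratedDeriv_two_wfun hg hμ b]
  exact funext fun x => (w2fun_hasDerivAt hg hμ b x).deriv

lemma iteratedDeriv_four_wfun {g : ℝ → ℂ} (hg : Continuous g) {μ : ℝ} (hμ : μ ≠ 0) (b : ℂ) :
    iteratedDeriv 4 (wfun μ g b) = w4fun μ g b := by
  rw [show (4:ℕ) = 3 + 1 from rfl, iteratedDeriv_succ, iteratedDeriv_three_wfun hg hμ b]
  exact funext fun x => (w3fun_hasDerivAt hg hμ b x).deriv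

lemma scf_zero (μ : ℝ) : scf μ 0 = 0 := by simp [scf]
lemma ccf_zero (μ : ℝ) : ccf μ 0 = 1 := by simp [ccf]
lemma Ffun_zero (g : ℝ → ℂ) : Ffun g 0 = 0 := intervalIntegral.integral_same
lemma Gfun_one (g : ℝ → ℂ) : Gfun g 1 = 0 := intervalIntegral.integral_same
lemma Pf_zero (μ : ℝ) (g : ℝ → ℂ) : Pf μ g 0 = 0 := intervalIntegral.integral_same
lemma Qf_zero (μ : ℝ) (g : ℝ → ℂ) : Qf μ g 0 = 0 := intervalIntegral.integral_same

lemma wfun_zero (μ : ℝ) (g : ℝ → ℂ) (b : ℂ) : wfun μ g b 0 = 0 := by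
  simp [wfun, scf_zero, Pf_zero, Qf_zero]

/-! ### Uniqueness -/

lemma key_hasDerivAt (F : ℝ → ℂ) (hF : ContDiff ℝ 4 F) (k : ℕ) (hk : k < 4) (x : ℝ) :
    HasDerivAt (iteratedDeriv k F) (iteratedDeriv (k+1) F x) x := by
  rw [iteratedDeriv_succ]
  exact ((hF.differentiable_iteratedDeriv k (by exact_mod_cast hk)) x).hasDerivAt

lemma inner_hasDerivAt (μ x : ℝ) : HasDerivAt (fun s : ℝ => μ * (1 - s)) (-μ) x := by
  have h1 : HasDerivAt (fun s : ℝ => 1 - s) (-1) x := by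
    simpa using (hasDerivAt_id x).const_sub 1
  simpa using h1.const_mul μ

lemma ccf_comp_hasDerivAt (μ x : ℝ) :
    HasDerivAt (fun s => ccf μ (1 - s)) (-((μ:ℂ) * scf μ (1-x))) x := by
  have h2 : HasDerivAt (fun s : ℝ => Real.cosh (μ * (1 - s))) (Real.sinh (μ*(1-x)) * (-μ)) x :=
    (Real.hasDerivAt_cosh _).comp x (inner_hasDerivAt μ x)
  have h3 := h2.ofReal_comp
  refine h3.congr_deriv ?_
  unfold scf; push_cast; ring

lemma scf_comp_hasDerivAt (μ x : ℝ) :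
    HasDerivAt (fun s => scf μ (1 - s)) (-((μ:ℂ) * ccf μ (1-x))) x := by
  have h2 : HasDerivAt (fun s : ℝ => Real.sinh (μ * (1 - s))) (Real.cosh (μ*(1-x)) * (-μ)) x :=
    (Real.hasDerivAt_sinh _).comp x (inner_hasDerivAt μ x)
  have h3 := h2.ofReal_comp
  refine h3.congr_deriv ?_
  unfold ccf; push_cast; ring

lemma const_on_Icc {F : ℝ → ℂ} {d : ℝ → ℂ} (hF : ∀ x, HasDerivAt F (d x) x)
    (hd : ∀ x ∈ Ico (0:ℝ) 1, d x = 0) : ∀ s ∈ Icc (0:ℝ) 1, F s = F 0 := by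
  apply constant_of_has_deriv_right_zero
  · exact (continuous_iff_continuousAt.mpr fun x => ((hF x).differentiableAt).continuousAt).continuousOn
  · intro x hx
    have := hF x
    rw [hd x hx] at this
    exact this.hasDerivWithinAt

lemma bvp_unique (η γ κ : ℝ) (hγ : η^2 < γ) (f : ℝ → ℂ) (c : ℂ) (w w' : ℝ → ℂ)
    (hw : SolvesBVP η γ κ f c w) (hw' : SolvesBVP η γ κ f c w') :
    ∀ s ∈ Icc (0:ℝ) 1, w' s = w s := by
  obtain ⟨hC, hode, h00, h20, h21, h31⟩ := hw
  obtain ⟨hC', hode', h00', h20', h21', h31'⟩ := hw'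
  have hγη : (0:ℝ) < γ - η^2 := by linarith
  set μ : ℝ := Real.sqrt (γ - η^2) with hμdef
  have hμpos : 0 < μ := Real.sqrt_pos.mpr hγη
  have hμ : μ ≠ 0 := hμpos.ne'
  have hμ' : (μ:ℂ) ≠ 0 := Complex.ofReal_ne_zero.mpr hμ
  have hμsq : μ^2 = γ - η^2 := Real.sq_sqrt hγη.le
  have hms : ((γ - η^2 : ℝ) : ℂ) = (μ:ℂ)^2 := by rw [← hμsq]; push_cast; ring
  have hsinh : Real.sinh μ ≠ 0 := (Real.sinh_pos_iff.mpr hμpos).ne'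
  have hsinh' : ((Real.sinh μ : ℝ) : ℂ) ≠ 0 := Complex.ofReal_ne_zero.mpr hsinh
  set u : ℝ → ℂ := fun s => iteratedDeriv 2 w' s - iteratedDeriv 2 w s with hu_def
  set u1 : ℝ → ℂ := fun s => iteratedDeriv 3 w' s - iteratedDeriv 3 w s with hu1_def
  set u2 : ℝ → ℂ := fun s => iteratedDeriv 4 w' s - iteratedDeriv 4 w s with hu2_def
  have hu : ∀ x, HasDerivAt u (u1 x) x := fun x =>
    (key_hasDerivAt w' hC' 2 (by norm_num) x).sub (key_hasDerivAt w hC 2 (by norm_num) x)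
  have hu1 : ∀ x, HasDerivAt u1 (u2 x) x := fun x =>
    (key_hasDerivAt w' hC' 3 (by norm_num) x).sub (key_hasDerivAt w hC 3 (by norm_num) x)
  have hODE : ∀ s ∈ Icc (0:ℝ) 1, u2 s = (μ:ℂ)^2 * u s := by
    intro s hs
    have e1 := hode s hs
    have e2 := hode' s hs
    rw [hms] at e1 e2
    simp only [hu2_def, hu_def]
    linear_combination e2 - e1
  have hu_one : u 1 = 0 := by simp only [hu_def]; linear_combination h21' - h21
  have hu_zero0 : u 0 = 0 := by simp only [hu_def]; rw [h20, h20']; ring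
  -- first constant function
  have hh : ∀ x, HasDerivAt (fun s => (μ:ℂ) * u s * ccf μ (1-s) + u1 s * scf μ (1-s))
      ((u2 x - (μ:ℂ)^2 * u x) * scf μ (1-x)) x := by
    intro x
    have h := (((hu x).const_mul (μ:ℂ)).mul (ccf_comp_hasDerivAt μ x)).add
      ((hu1 x).mul (scf_comp_hasDerivAt μ x))
    refine h.congr_deriv ?_
    ring
  have hg2 : ∀ x, HasDerivAt (fun s => (μ:ℂ) * u s * ccf μ s - u1 s * scf μ s)
      (((μ:ℂ)^2 * u x - u2 x) * scf μ x) x := by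
    intro x
    have h := (((hu x).const_mul (μ:ℂ)).mul (ccf_hasDerivAt μ x)).sub
      ((hu1 x).mul (scf_hasDerivAt μ x))
    refine h.congr_deriv ?_
    ring
  have hhconst := const_on_Icc hh (fun x hx => by
    rw [hODE x ⟨hx.1, hx.2.le⟩]; ring)
  have hg2const := const_on_Icc hg2 (fun x hx => by
    rw [hODE x ⟨hx.1, hx.2.le⟩]; ring)
  have hh1 : (μ:ℂ) * u 1 * ccf μ (1-1) + u1 1 * scf μ (1-1) = 0 := by
    rw [hu_one]; norm_num [ccf_zero, scf_zero]
  have hh0 : (μ:ℂ) * u 0 * ccf μ (1-0) + u1 0 * scf μ (1-0) = 0 := by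
    have := hhconst 1 (by norm_num)
    rw [hh1] at this
    exact this.symm
  have hhall : ∀ s ∈ Icc (0:ℝ) 1, (μ:ℂ) * u s * ccf μ (1-s) + u1 s * scf μ (1-s) = 0 := by
    intro s hs
    have := hhconst s hs
    rw [this, hh0]
  have hg2zero : (μ:ℂ) * u 0 * ccf μ 0 - u1 0 * scf μ 0 = 0 := by
    rw [hu_zero0]; norm_num [ccf_zero, scf_zero]
  have hg2all : ∀ s ∈ Icc (0:ℝ) 1, (μ:ℂ) * u s * ccf μ s - u1 s * scf μ s = 0 := by
    intro s hs
    have := hg2const s hs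
    rw [this, hg2zero]
  have hu_vanish : ∀ s ∈ Icc (0:ℝ) 1, u s = 0 := by
    intro s hs
    have e1 := hhall s hs
    have e2 := hg2all s hs
    have hid : scf μ s * ccf μ (1-s) + ccf μ s * scf μ (1-s) = ((Real.sinh μ : ℝ) : ℂ) := by
      unfold scf ccf
      norm_cast
      rw [← Real.sinh_add]
      ring_nf
    have hkey : ((μ:ℂ) * ((Real.sinh μ : ℝ) : ℂ)) * u s = 0 := by
      linear_combination (scf μ s) * e1 + (scf μ (1-s)) * e2 - ((μ:ℂ) * u s) * hid
    exact (mul_eq_zero.mp hkey).resolve_left (mul_ne_zero hμ' hsinh')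
  -- u1 vanishes
  have hu1const := const_on_Icc hu1 (fun x hx => by
    rw [hODE x ⟨hx.1, hx.2.le⟩, hu_vanish x ⟨hx.1, hx.2.le⟩]; ring)
  have hu1mid : u1 (1/2 : ℝ) = 0 := by
    have hev : u =ᶠ[nhds (1/2 : ℝ)] (fun _ => (0:ℂ)) := by
      filter_upwards [Icc_mem_nhds (show (0:ℝ) < 1/2 by norm_num)
        (show (1/2:ℝ) < 1 by norm_num)] with x hx using hu_vanish x hx
    have h1 : deriv u (1/2 : ℝ) = deriv (fun _ => (0:ℂ)) (1/2 : ℝ) := hev.deriv_eq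
    rw [deriv_const] at h1
    rw [← (hu (1/2 : ℝ)).deriv]
    exact h1
  have hu1all : ∀ s ∈ Icc (0:ℝ) 1, u1 s = 0 := by
    intro s hs
    rw [hu1const s hs, ← hu1const (1/2) (by norm_num), hu1mid]
  -- dv vanishes
  set dv : ℝ → ℂ := fun s => deriv w' s - deriv w s with hdv_def
  have hdv : ∀ x, HasDerivAt dv (u x) x := by
    intro x
    have a1 : HasDerivAt (deriv w') (iteratedDeriv 2 w' x) x := by
      have := key_hasDerivAt w' hC' 1 (by norm_num) x
      rwa [iteratedDeriv_one] at this
    have a2 : HasDerivAt (deriv w) (iteratedDeriv 2 w x) x := by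
      have := key_hasDerivAt w hC 1 (by norm_num) x
      rwa [iteratedDeriv_one] at this
    exact a1.sub a2
  have hdv1 : dv 1 = 0 := by
    have hb : u1 1 = ((γ - η^2 : ℝ) : ℂ) * dv 1 := by
      simp only [hu1_def, hdv_def]
      linear_combination h31' - h31
    rw [hu1all 1 (by norm_num), hms] at hb
    have := hb.symm
    rcases mul_eq_zero.mp this with h | h
    · exact absurd h (pow_ne_zero 2 hμ')
    · exact h
  have hdvconst := const_on_Icc hdv (fun x hx => hu_vanish x ⟨hx.1, hx.2.le⟩)
  have hdvall : ∀ s ∈ Icc (0:ℝ) 1, dv s = 0 := by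
    intro s hs
    rw [hdvconst s hs, ← hdvconst 1 (by norm_num), hdv1]
  -- v vanishes
  have hv : ∀ x, HasDerivAt (fun s => w' s - w s) (dv x) x := fun x =>
    (((hC'.differentiable (by norm_num)) x).hasDerivAt).sub
      (((hC.differentiable (by norm_num)) x).hasDerivAt)
  have hvconst := const_on_Icc hv (fun x hx => hdvall x ⟨hx.1, hx.2.le⟩)
  intro s hs
  have := hvconst s hs
  rw [h00, h00', sub_zero] at this
  exact sub_eq_zero.mp this

/-! ### Main theorem -/

/-- the static boundary-value problem has exactly one `C⁴`
solution on `[0,1]`, given by the explicit formula `wExplicit`. -/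
theorem static_problem_unique_solution (η γ κ : ℝ) (hη : 0 ≤ η) (hκ : 0 ≤ κ)
    (hγ : η^2 < γ) (f : ℝ → ℂ) (hf : ContinuousOn f (Icc (0:ℝ) 1)) (c : ℂ) :
    ∃ w : ℝ → ℂ, SolvesBVP η γ κ f c w ∧
      (∀ s ∈ Icc (0:ℝ) 1, w s = wExplicit η γ κ f c s) ∧
      (∀ w' : ℝ → ℂ, SolvesBVP η γ κ f c w' →
        ∀ s ∈ Icc (0:ℝ) 1, w' s = w s) := by
  have hγη : (0:ℝ) < γ - η^2 := by linarith
  set μ : ℝ := Real.sqrt (γ - η^2) with hμdef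
  have hμpos : 0 < μ := Real.sqrt_pos.mpr hγη
  have hμ : μ ≠ 0 := hμpos.ne'
  have hμ' : (μ:ℂ) ≠ 0 := Complex.ofReal_ne_zero.mpr hμ
  have hμsq : μ^2 = γ - η^2 := Real.sq_sqrt hγη.le
  have hms : ((γ - η^2 : ℝ) : ℂ) = (μ:ℂ)^2 := by rw [← hμsq]; push_cast; ring
  have hsinh : Real.sinh μ ≠ 0 := (Real.sinh_pos_iff.mpr hμpos).ne'
  have hsinh' : ((Real.sinh μ : ℝ) : ℂ) ≠ 0 := Complex.ofReal_ne_zero.mpr hsinh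
  set g : ℝ → ℂ := fun x => f ((projIcc (0:ℝ) 1 zero_le_one x : Icc (0:ℝ) 1) : ℝ) with hgdef
  have hg : Continuous g :=
    hf.comp_continuous (continuous_subtype_val.comp continuous_projIcc)
      (fun x => (projIcc (0:ℝ) 1 zero_le_one x).2)
  have hgf : ∀ x ∈ Icc (0:ℝ) 1, g x = f x := by
    intro x hx
    simp only [hgdef, projIcc_of_mem zero_le_one hx]
  have hFg : ∀ s ∈ Icc (0:ℝ) 1, Fint f s = Ffun g s := by
    intro s hs
    rw [Fint, Ffun]
    apply intervalIntegral.integral_congr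
    intro t ht
    rw [uIcc_of_le hs.1] at ht
    rw [Gfun]
    apply intervalIntegral.integral_congr
    intro r hr
    rw [uIcc_of_le (le_trans ht.2 hs.2)] at hr
    exact (hgf r ⟨le_trans ht.1 hr.1, hr.2⟩).symm
  have hconv : ∀ s ∈ Icc (0:ℝ) 1,
      (∫ r in (0:ℝ)..s, ((Real.sinh (μ * (s - r)) : ℝ) : ℂ) * Fint f r)
        = scf μ s * Pf μ g s - ccf μ s * Qf μ g s := by
    intro s hs
    have heq : (∫ r in (0:ℝ)..s, ((Real.sinh (μ * (s - r)) : ℝ) : ℂ) * Fint f r)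
        = ∫ r in (0:ℝ)..s,
            (scf μ s * (ccf μ r * Ffun g r) - ccf μ s * (scf μ r * Ffun g r)) := by
      apply intervalIntegral.integral_congr
      intro r hr
      rw [uIcc_of_le hs.1] at hr
      dsimp only
      rw [hFg r ⟨hr.1, le_trans hr.2 hs.2⟩]
      have hsinhsub : Real.sinh (μ * (s - r))
          = Real.sinh (μ*s) * Real.cosh (μ*r) - Real.cosh (μ*s) * Real.sinh (μ*r) := by
        rw [show μ * (s-r) = μ*s - μ*r by ring, Real.sinh_sub]
      rw [hsinhsub]; unfold scf ccf; push_cast; ring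
    rw [heq, intervalIntegral.integral_sub, intervalIntegral.integral_const_mul,
      intervalIntegral.integral_const_mul]
    · rfl
    · exact (continuous_const.mul
        ((ccf_continuous μ).mul (Ffun_continuous hg))).intervalIntegrable _ _
    · exact (continuous_const.mul
        ((scf_continuous μ).mul (Ffun_continuous hg))).intervalIntegrable _ _
  set b : ℂ := bconst η γ κ f c with hbdef
  have hb : b * ((μ:ℂ)^2 * scf μ 1)
      = -(μ:ℂ) * (scf μ 1 * Pf μ g 1 - ccf μ 1 * Qf μ g 1)
        - Ffun g 1 - ((κ:ℝ):ℂ) * c := by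
    have hden : (((μ:ℝ)^2 * Real.sinh μ : ℝ) : ℂ) = (μ:ℂ)^2 * scf μ 1 := by
      unfold scf; rw [mul_one]; push_cast; ring
    have hdenne : (μ:ℂ)^2 * scf μ 1 ≠ 0 := by
      apply mul_ne_zero (pow_ne_zero 2 hμ')
      unfold scf; rw [mul_one]; exact hsinh'
    rw [hbdef, bconst, ← hμdef, hconv 1 (by norm_num), hFg 1 (by norm_num), hden,
      div_mul_cancel₀ _ hdenne]
  have hsol : SolvesBVP η γ κ f c (wfun μ g b) := by
    refine ⟨wfun_contDiff hg hμ b, ?_, wfun_zero μ g b, ?_, ?_, ?_⟩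
    · -- ODE
      intro s hs
      rw [iteratedDeriv_four_wfun hg hμ b, iteratedDeriv_two_wfun hg hμ b, hms]
      simp only [w4fun]
      rw [← hgf s hs]
      ring
    · -- second deriv at 0
      rw [iteratedDeriv_two_wfun hg hμ b]
      simp [w2fun, wfun_zero, Ffun_zero]
    · -- second deriv at 1
      rw [iteratedDeriv_two_wfun hg hμ b]
      simp only [w2fun, wfun]
      have hinv : (μ:ℂ) * (1/(μ:ℂ)) = 1 := by field_simp
      linear_combination hb + ((μ:ℂ) * (scf μ 1 * Pf μ g 1 - ccf μ 1 * Qf μ g 1)) * hinv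
    · -- third boundary condition
      rw [iteratedDeriv_three_wfun hg hμ b, deriv_wfun hg hμ b, hms]
      simp [w3fun, Gfun_one]
  refine ⟨wfun μ g b, hsol, ?_, ?_⟩
  · -- explicit formula
    intro s hs
    rw [wExplicit, ← hμdef, ← hbdef, hconv s hs]
    rfl
  · -- uniqueness
    intro w' hw'
    exact bvp_unique η γ κ hγ f c (wfun μ g b) w' hsol hw'
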